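/- If a linear order L has uncountable character, then there is an order-embedding of ω₁ into L or an order-embedding of ω₁ with the reversed order into L. -/

import Mathlib

open Ordinal Cardinal

/-- `L` has character at most `ω`: every point is the unique element lying between a
countable set below it and a countable set above it. -/
def CharLEOmega (L : Type*) [LinearOrder L] : Prop :=
  ∀ l : L, ∃ A B : Set L, A.Countable ∧ B.Countable ∧
    (∀ a ∈ A, ∀ b ∈ B, a < b) ∧
    {x | (∀ a ∈ A, a < x) ∧ (∀ b ∈ B, x < b)} = {l}

section aux

lemma countable_Iio_toType (a : (ω_ 1).ToType) : (Set.Iio a).Countable := by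
  rw [Cardinal.countable_iff_lt_aleph_one]
  have h := fun i => Cardinal.mk_Iio_ord_toType (c := ℵ₁) i
  rw [Cardinal.ord_aleph] at h
  exact h a

noncomputable def buildF {M : Type*} [LinearOrder M]
    (H : ∀ A : Set M, A.Countable → ∃ s : M, ∀ a ∈ A, a < s) :
    (ω_ 1).ToType → M :=
  wellFounded_lt.fix fun a ih =>
    (H (Set.range fun b : Set.Iio a => ih b b.2)
      (by haveI := (countable_Iio_toType a).to_subtype; exact Set.countable_range _)).choose

lemma buildF_strictMono {M : Type*} [LinearOrder M]
    (H : ∀ A : Set M, A.Countable → ∃ s : M, ∀ a ∈ A, a < s) :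
    StrictMono (buildF H) := by
  intro b a hba
  have heq : buildF H a =
      (H (Set.range fun c : Set.Iio a => buildF H c)
        (by haveI := (countable_Iio_toType a).to_subtype; exact Set.countable_range _)).choose := by
    conv_lhs => rw [buildF, WellFounded.fix_eq]
    rfl
  rw [heq]
  have hc : (Set.range fun c : Set.Iio a => buildF H c).Countable := by
    haveI := (countable_Iio_toType a).to_subtype; exact Set.countable_range _
  exact (H _ hc).choose_spec _ ⟨⟨b, hba⟩, rfl⟩

lemma key {M : Type*} [LinearOrder M]
    (H : ∀ A : Set M, A.Countable → ∃ s : M, ∀ a ∈ A, a < s) :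
    Nonempty ((ω_ 1).ToType ↪o M) :=
  ⟨OrderEmbedding.ofStrictMono _ (buildF_strictMono H)⟩

end aux

theorem stmt1 (L : Type) [LinearOrder L] (h : ¬ CharLEOmega L) :
    Nonempty ((ω_ 1).ToType ↪o L) ∨ Nonempty (((ω_ 1).ToType)ᵒᵈ ↪o L) := by
  rw [CharLEOmega] at h
  push_neg at h
  obtain ⟨l, hl⟩ := h
  by_cases h1 : ∀ A : Set (Set.Iio l), A.Countable → ∃ s, ∀ a ∈ A, a < s
  · left
    obtain ⟨e⟩ := key h1
    exact ⟨e.trans (OrderEmbedding.subtype _)⟩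
  by_cases h2 : ∀ B : Set ((Set.Ioi l)ᵒᵈ), B.Countable → ∃ s, ∀ b ∈ B, b < s
  · right
    obtain ⟨e⟩ := key h2
    exact ⟨(e.dual.trans (OrderIso.dualDual _).symm.toOrderEmbedding).trans
      (OrderEmbedding.subtype _)⟩
  exfalso
  push_neg at h1 h2
  obtain ⟨A, hAc, hA⟩ := h1
  obtain ⟨B, hBc, hB⟩ := h2
  refine (hl (Subtype.val '' A) (Subtype.val '' B) (hAc.image _) (hBc.image _) ?_ ?_)
  · rintro a ⟨a', -, rfl⟩ b ⟨b', -, rfl⟩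
    exact lt_trans a'.2 b'.2
  · ext x
    simp only [Set.mem_setOf_eq, Set.mem_singleton_iff]
    constructor
    · rintro ⟨hx1, hx2⟩
      by_contra hne
      rcases lt_or_gt_of_ne hne with hlt | hgt
      · obtain ⟨a, haA, ha⟩ := hA ⟨x, hlt⟩
        have hxa : x ≤ a.1 := ha
        exact absurd (hx1 a.1 ⟨a, haA, rfl⟩) (not_lt.2 hxa)
      · obtain ⟨b, hbB, hb⟩ := hB ⟨x, hgt⟩
        have hbx : b.1 ≤ x := hb
        exact absurd (hx2 b.1 ⟨b, hbB, rfl⟩) (not_lt.2 hbx)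
    · rintro rfl
      constructor
      · rintro a ⟨a', -, rfl⟩; exact a'.2
      · rintro b ⟨b', -, rfl⟩; exact b'.2
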